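/- Let a, b be real numbers with a ≥ 1 and b ≥ 1, and let x be any real number. Then x²/a + (2ab + a + b − x)²/b + (2a+3)·x + (2b+3)·(2ab + a + b − x) > 3a²b + 3ab² + 8ab + 2a² + 2b² + 4a + 4b. -/
import Mathlib

/-- For reals `a ≥ 1`, `b ≥ 1` and any real `x`,
`x²/a + (2ab+a+b−x)²/b + (2a+3)x + (2b+3)(2ab+a+b−x) > 3a²b + 3ab² + 8ab + 2a² + 2b² + 4a + 4b`. -/
theorem strict_inequality (a b x : ℝ) (ha : 1 ≤ a) (hb : 1 ≤ b) :
    3*a^2*b + 3*a*b^2 + 8*a*b + 2*a^2 + 2*b^2 + 4*a + 4*b <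
      x^2/a + (2*a*b + a + b - x)^2/b + (2*a + 3)*x + (2*b + 3)*(2*a*b + a + b - x) := by
  have ha0 : (0:ℝ) < a := by linarith
  have hb0 : (0:ℝ) < b := by linarith
  have h1 : 2*(b+1)*x - a*(b+1)^2 ≤ x^2/a := by
    rw [le_div_iff₀ ha0]; nlinarith [sq_nonneg (x - a*(b+1))]
  have h2 : 2*(a+1)*(2*a*b + a + b - x) - b*(a+1)^2 ≤ (2*a*b + a + b - x)^2/b := by
    rw [le_div_iff₀ hb0]; nlinarith [sq_nonneg ((2*a*b + a + b - x) - b*(a+1))]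
  nlinarith [mul_le_mul ha hb (by linarith : (0:ℝ) ≤ 1) (by linarith : (0:ℝ) ≤ a)]
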